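/- arXiv:2405.08975 — 2 statements merged into one kernel-verified Lean document; each statement's English description precedes it below -/
import Mathlib

section
/- Fix $n \in \mathbb{N}$, $R \in (0,1)$, and define $\gamma(R) = \min\{r \in \mathbb{N} : r \geq nR\}$ and, for $t \in [0, \tfrac{\gamma(R)-1}{n})$, $g(t;R) = \frac{R(n - \lceil nt \rceil)}{nR - \lceil nt \rceil}\,\mathbb{P}(\mathrm{Bin}(n,R) \leq \lceil nt \rceil)$, with $g(\tfrac{\gamma(R)-1}{n};R) = \max\{1, \frac{R(n-\gamma(R)+1)}{nR - \gamma(R)+1}\mathbb{P}(\mathrm{Bin}(n,R) \leq \gamma(R)-1)\}$. Then $g(\cdot; R)$ is non-decreasing on $[0, \tfrac{\gamma(R)-1}{n}]$; moreover, if $t_1 < t_2$ with $\lceil n t_2 \rceil = \lceil n t_1 \rceil + 1$ and $t_2 \le \tfrac{\gamma(R)-1}{n}$, then $g(t_1;R) < g(t_2;R)$. -/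
open MeasureTheory ProbabilityTheory Finset

/-- CDF of a Binomial(n,R) at k: P(Bin(n,R) ≤ k). -/
noncomputable def binCDF (n k : ℕ) (R : ℝ) : ℝ :=
  ∑ j ∈ Finset.range (k + 1), (n.choose j : ℝ) * R ^ j * (1 - R) ^ (n - j)

/-- Upper tail of a Binomial(n,p) at t: P(Bin(n,p) ≥ t). -/
noncomputable def binTail (n t : ℕ) (p : ℝ) : ℝ :=
  ∑ j ∈ Finset.Icc t n, (n.choose j : ℝ) * p ^ j * (1 - p) ^ (n - j)

/-- γ(R) = min {r ∈ ℕ : r ≥ n R}. -/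
noncomputable def gam (n : ℕ) (R : ℝ) : ℕ := sInf {r : ℕ | (n : ℝ) * R ≤ r}

/-- The function g(t; R) from the paper. -/
noncomputable def g (n : ℕ) (R t : ℝ) : ℝ :=
  if t = ((gam n R : ℝ) - 1) / n then
    max 1 (R * ((n : ℝ) - ((gam n R : ℝ) - 1)) / ((n : ℝ) * R - ((gam n R : ℝ) - 1)) *
      binCDF n (gam n R - 1) R)
  else
    R * ((n : ℝ) - (⌈(n : ℝ) * t⌉ : ℝ)) / ((n : ℝ) * R - (⌈(n : ℝ) * t⌉ : ℝ)) *
      binCDF n (⌈(n : ℝ) * t⌉).toNat R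

noncomputable def gAux (n : ℕ) (R : ℝ) (k : ℕ) : ℝ :=
  R * ((n : ℝ) - (k : ℝ)) / ((n : ℝ) * R - (k : ℝ)) * binCDF n k R

lemma binCDF_pos (n k : ℕ) {R : ℝ} (hR : R ∈ Set.Ioo (0 : ℝ) 1) : 0 < binCDF n k R := by
  have h1R : (0:ℝ) < 1 - R := by linarith [hR.2]
  unfold binCDF
  apply Finset.sum_pos'
  · intro i _
    have := hR.1
    positivity
  · refine ⟨0, Finset.mem_range.mpr (Nat.succ_pos k), ?_⟩
    simp only [Nat.choose_zero_right, pow_zero, Nat.cast_one, one_mul, mul_one, Nat.sub_zero]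
    positivity

lemma binCDF_lt (n k : ℕ) {R : ℝ} (hR : R ∈ Set.Ioo (0 : ℝ) 1) (hk : k + 1 ≤ n) :
    binCDF n k R < binCDF n (k+1) R := by
  have h1R : (0:ℝ) < 1 - R := by linarith [hR.2]
  have hc : (0:ℝ) < (n.choose (k+1) : ℝ) := by exact_mod_cast Nat.choose_pos hk
  have hterm : (0:ℝ) < (n.choose (k+1) : ℝ) * R ^ (k+1) * (1 - R) ^ (n - (k+1)) :=
    mul_pos (mul_pos hc (pow_pos hR.1 _)) (pow_pos h1R _)
  unfold binCDF
  rw [Finset.sum_range_succ (n := k + 1)]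
  linarith

lemma gAux_step (n : ℕ) {R : ℝ} (hR : R ∈ Set.Ioo (0 : ℝ) 1) (k : ℕ)
    (hk : (k : ℝ) + 1 < (n : ℝ) * R) : gAux n R k < gAux n R (k+1) := by
  have hk0 : (0:ℝ) ≤ (k:ℝ) := Nat.cast_nonneg k
  have hn0 : (0:ℝ) < (n:ℝ) := by nlinarith [hR.1, hR.2]
  have hnR : (n:ℝ) * R < n := by nlinarith [hR.2]
  have hd2 : (0:ℝ) < (n:ℝ) * R - ((k:ℝ) + 1) := by linarith
  have hd1 : (0:ℝ) < (n:ℝ) * R - (k:ℝ) := by linarith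
  have hnum2 : (0:ℝ) < (n:ℝ) - ((k:ℝ) + 1) := by linarith
  have hkn : k + 1 ≤ n := by exact_mod_cast le_of_lt (by linarith : ((k:ℝ)+1) < (n:ℝ))
  have hS1 : 0 < binCDF n k R := binCDF_pos n k hR
  have hS : binCDF n k R < binCDF n (k+1) R := binCDF_lt n k hR hkn
  have hcoef : R * ((n:ℝ) - (k:ℝ)) / ((n:ℝ) * R - (k:ℝ)) <
      R * ((n:ℝ) - ((k:ℝ)+1)) / ((n:ℝ) * R - ((k:ℝ)+1)) := by
    rw [div_lt_div_iff₀ hd1 hd2]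
    nlinarith [hR.1]
  have hcpos : 0 < R * ((n:ℝ) - (k:ℝ)) / ((n:ℝ) * R - (k:ℝ)) := by
    apply div_pos (by nlinarith [hR.1]) hd1
  unfold gAux
  push_cast
  calc R * ((n:ℝ) - (k:ℝ)) / ((n:ℝ) * R - (k:ℝ)) * binCDF n k R
      < R * ((n:ℝ) - ((k:ℝ)+1)) / ((n:ℝ) * R - ((k:ℝ)+1)) * binCDF n k R := by
        exact mul_lt_mul_of_pos_right hcoef hS1
    _ < R * ((n:ℝ) - ((k:ℝ)+1)) / ((n:ℝ) * R - ((k:ℝ)+1)) * binCDF n (k+1) R := by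
        exact mul_lt_mul_of_pos_left hS (lt_trans hcpos hcoef)

lemma gAux_mono (n : ℕ) {R : ℝ} (hR : R ∈ Set.Ioo (0 : ℝ) 1) :
    ∀ k m : ℕ, k ≤ m → (m : ℝ) < (n : ℝ) * R → gAux n R k ≤ gAux n R m := by
  intro k m hkm
  induction m, hkm using Nat.le_induction with
  | base => intro _; exact le_refl _
  | succ m hm ih =>
    intro hlt
    push_cast at hlt
    have hm' : (m : ℝ) < (n : ℝ) * R := by linarith
    exact le_trans (ih hm') (le_of_lt (gAux_step n hR m hlt))

lemma gAux_strict (n : ℕ) {R : ℝ} (hR : R ∈ Set.Ioo (0 : ℝ) 1) (k m : ℕ)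
    (hkm : k < m) (hlt : (m : ℝ) < (n : ℝ) * R) : gAux n R k < gAux n R m := by
  have h1 : ((k:ℝ) + 1) ≤ (m:ℝ) := by exact_mod_cast hkm
  have := gAux_step n hR k (lt_of_le_of_lt h1 hlt)
  exact lt_of_lt_of_le this (gAux_mono n hR (k+1) m hkm hlt)

theorem stmt_4 (n : ℕ) (hn : 0 < n) (R : ℝ) (hR : R ∈ Set.Ioo (0 : ℝ) 1) :
    MonotoneOn (g n R) (Set.Icc 0 (((gam n R : ℝ) - 1) / n)) ∧
    ∀ t1 t2 : ℝ, t1 ∈ Set.Icc (0 : ℝ) (((gam n R : ℝ) - 1) / n) →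
      t2 ∈ Set.Icc (0 : ℝ) (((gam n R : ℝ) - 1) / n) → t1 < t2 →
      ⌈(n : ℝ) * t2⌉ = ⌈(n : ℝ) * t1⌉ + 1 → g n R t1 < g n R t2 := by
  have hn0 : (0:ℝ) < (n:ℝ) := by exact_mod_cast hn
  have hnR0 : (0:ℝ) < (n:ℝ) * R := mul_pos hn0 hR.1
  have hnRn : (n:ℝ) * R < (n:ℝ) := by nlinarith [hR.2]
  have hmem : (n:ℝ) * R ≤ (gam n R : ℝ) := by
    have := Nat.sInf_mem (⟨n, le_of_lt hnRn⟩ : Set.Nonempty {r : ℕ | (n : ℝ) * R ≤ r})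
    exact this
  have hγ1 : 1 ≤ gam n R := by
    by_contra h
    have h0 : gam n R = 0 := by omega
    rw [h0] at hmem
    simp at hmem
    linarith
  have hcast : ((gam n R - 1 : ℕ) : ℝ) = (gam n R : ℝ) - 1 := by
    rw [Nat.cast_sub hγ1, Nat.cast_one]
  have hγlt : (gam n R : ℝ) - 1 < (n:ℝ) * R := by
    by_contra h
    push_neg at h
    have hin : gam n R - 1 ∈ {r : ℕ | (n : ℝ) * R ≤ r} := by
      simp only [Set.mem_setOf_eq, hcast]; exact h
    have h2 := Nat.sInf_le hin
    change gam n R ≤ gam n R - 1 at h2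
    omega
  set e : ℝ := ((gam n R : ℝ) - 1) / n with he
  -- bound on the ceiling
  have hbd : ∀ t ∈ Set.Icc (0:ℝ) e, ((⌈(n:ℝ)*t⌉).toNat : ℝ) ≤ (gam n R : ℝ) - 1 := by
    intro t ht
    have h1 : (n:ℝ) * t ≤ (gam n R : ℝ) - 1 := by
      have := mul_le_mul_of_nonneg_left ht.2 hn0.le
      rwa [he, mul_div_cancel₀ _ (ne_of_gt hn0)] at this
    have h2 : ⌈(n:ℝ)*t⌉ ≤ (gam n R : ℤ) - 1 := Int.ceil_le.mpr (by push_cast; linarith)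
    have h0 : 0 ≤ ⌈(n:ℝ)*t⌉ := Int.ceil_nonneg (mul_nonneg hn0.le ht.1)
    have : ((⌈(n:ℝ)*t⌉).toNat : ℤ) ≤ (gam n R : ℤ) - 1 := by omega
    exact_mod_cast (by exact_mod_cast this : ((⌈(n:ℝ)*t⌉).toNat : ℝ) ≤ ((gam n R : ℤ) : ℝ) - 1)
  -- evaluation off the endpoint
  have heval : ∀ t ∈ Set.Icc (0:ℝ) e, t ≠ e → g n R t = gAux n R (⌈(n:ℝ)*t⌉).toNat := by
    intro t ht htne
    have h0 : 0 ≤ ⌈(n:ℝ)*t⌉ := Int.ceil_nonneg (mul_nonneg hn0.le ht.1)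
    unfold g gAux
    rw [if_neg htne,
      show ((⌈(n:ℝ)*t⌉ : ℤ) : ℝ) = ((⌈(n:ℝ)*t⌉.toNat : ℕ) : ℝ) by
        exact_mod_cast (Int.toNat_of_nonneg h0).symm]
  -- evaluation at the endpoint
  have hend : g n R e = max 1 (gAux n R (gam n R - 1)) := by
    unfold g gAux
    rw [if_pos rfl, hcast]
  have hγm1lt : ((gam n R - 1 : ℕ) : ℝ) < (n:ℝ) * R := by rw [hcast]; exact hγlt
  have hle_end : ∀ k : ℕ, (k:ℝ) ≤ (gam n R : ℝ) - 1 → gAux n R k ≤ g n R e := by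
    intro k hk
    have hkle : k ≤ gam n R - 1 := by
      have : (k:ℝ) ≤ ((gam n R - 1 : ℕ) : ℝ) := by rw [hcast]; exact hk
      exact_mod_cast this
    calc gAux n R k ≤ gAux n R (gam n R - 1) := gAux_mono n hR k _ hkle hγm1lt
      _ ≤ max 1 (gAux n R (gam n R - 1)) := le_max_right _ _
      _ = g n R e := hend.symm
  constructor
  · intro t1 h1 t2 h2 h12
    by_cases ht2 : t2 = e
    · by_cases ht1 : t1 = e
      · rw [ht1, ht2]
      · have h3 := hle_end _ (hbd t1 h1)
        rw [heval t1 h1 ht1, ht2]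
        exact h3
    · have ht2lt : t2 < e := lt_of_le_of_ne h2.2 ht2
      have ht1 : t1 ≠ e := by intro h; rw [h] at h12; linarith [lt_of_le_of_lt h12 ht2lt]
      rw [heval t1 h1 ht1, heval t2 h2 ht2]
      have hk12 : (⌈(n:ℝ)*t1⌉).toNat ≤ (⌈(n:ℝ)*t2⌉).toNat := by
        have := Int.ceil_le_ceil (R := ℝ) (mul_le_mul_of_nonneg_left h12 hn0.le)
        omega
      exact gAux_mono n hR _ _ hk12 (lt_of_le_of_lt (hbd t2 h2) hγlt)
  · intro t1 t2 h1 h2 hlt hceil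
    have ht1 : t1 ≠ e := fun h => by
      rw [h] at hlt; linarith [lt_of_lt_of_le hlt h2.2]
    have h01 : 0 ≤ ⌈(n:ℝ)*t1⌉ := Int.ceil_nonneg (mul_nonneg hn0.le h1.1)
    have hk2 : (⌈(n:ℝ)*t2⌉).toNat = (⌈(n:ℝ)*t1⌉).toNat + 1 := by omega
    have hk2R : (((⌈(n:ℝ)*t2⌉).toNat : ℕ) : ℝ) < (n:ℝ) * R :=
      lt_of_le_of_lt (hbd t2 h2) hγlt
    have hstrict : gAux n R (⌈(n:ℝ)*t1⌉).toNat < gAux n R (⌈(n:ℝ)*t2⌉).toNat :=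
      gAux_strict n hR _ _ (by omega) hk2R
    have hb2 := hbd t2 h2
    rw [hk2] at hstrict hb2
    rw [heval t1 h1 ht1]
    by_cases ht2 : t2 = e
    · rw [ht2]
      exact lt_of_lt_of_le hstrict (hle_end _ hb2)
    · rw [heval t2 h2 ht2, hk2]
      exact hstrict
end

section
/- Fix $n \in \mathbb{N}$ and $0 < R_1 < R_2 < 1$. Let $t \in [0, \tfrac{\gamma(R_1)-1}{n})$ and $k = \lceil nt \rceil$. Then $g(t; R_2) \leq g(t; R_1)$, where $g(t;R) = \frac{R(n-k)}{nR - k}\mathbb{P}(\mathrm{Bin}(n,R) \leq k)$. That is, $g$ is non-increasing in its second argument on this region. -/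
open MeasureTheory ProbabilityTheory Finset

lemma hasDerivAt_term (c : ℝ) (j m : ℕ) (R : ℝ) :
    HasDerivAt (fun R => c * R ^ j * (1 - R) ^ m)
      (c * ((j : ℝ) * R ^ (j - 1) * (1 - R) ^ m - (m : ℝ) * R ^ j * (1 - R) ^ (m - 1))) R := by
  have h1 : HasDerivAt (fun R : ℝ => R ^ j) ((j : ℝ) * R ^ (j - 1)) R := hasDerivAt_pow j R
  have h2 : HasDerivAt (fun R : ℝ => (1 - R) ^ m) (-((m : ℝ) * (1 - R) ^ (m - 1))) R := by
    have := (hasDerivAt_pow m (1 - R)).comp R ((hasDerivAt_const R (1 : ℝ)).sub (hasDerivAt_id R))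
    simpa [Function.comp_def] using this
  have h := (h1.const_mul c).mul h2
  refine h.congr_deriv (Eq.symm ?_)
  ring

lemma choose_A (n k : ℕ) (hn : 1 ≤ n) :
    ((n : ℝ)) * ((n - 1).choose k : ℝ) = ((k + 1 : ℕ) : ℝ) * (n.choose (k + 1) : ℝ) := by
  have h := Nat.add_one_mul_choose_eq (n - 1) k
  rw [Nat.sub_add_cancel hn] at h
  exact_mod_cast h.trans (Nat.mul_comm _ _)

lemma choose_B (n k : ℕ) (hk : k + 1 < n) :
    ((n : ℝ)) * ((n - 1).choose (k + 1) : ℝ) = ((n - (k + 1) : ℕ) : ℝ) * (n.choose (k + 1) : ℝ) := by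
  have h1 := choose_A n (k + 1) (by omega)
  have h2 := Nat.choose_succ_right_eq n (k + 1)
  have : (n : ℕ) * (n - 1).choose (k + 1) = n.choose (k + 1) * (n - (k + 1)) := by
    have := choose_A n (k+1) (by omega)
    -- do in ℕ: n * C(n-1,k+1) = (k+2) * C(n,k+2) = C(n,k+1) * (n-(k+1))
    have hA : n * (n - 1).choose (k + 1) = n.choose (k + 2) * (k + 2) := by
      have h := Nat.add_one_mul_choose_eq (n - 1) (k + 1)
      rwa [Nat.sub_add_cancel (by omega : 1 ≤ n)] at h
    rw [hA, Nat.choose_succ_right_eq n (k + 1)]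
  exact_mod_cast by rw [this]; ring

lemma hasDerivAt_binCDF (n : ℕ) : ∀ k, k < n → ∀ R : ℝ,
    HasDerivAt (fun R => binCDF n k R)
      (-((n : ℝ) * ((n - 1).choose k : ℝ) * R ^ k * (1 - R) ^ (n - 1 - k))) R := by
  intro k
  induction k with
  | zero =>
    intro hk R
    have h := hasDerivAt_term ((n.choose 0 : ℝ)) 0 (n - 0) R
    have : binCDF n 0 = fun R : ℝ => (n.choose 0 : ℝ) * R ^ 0 * (1 - R) ^ (n - 0) := by
      funext R; simp [binCDF]
    rw [this]
    refine h.congr_deriv (Eq.symm ?_)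
    simp
  | succ k ih =>
    intro hk R
    have hkn : k < n := by omega
    have hfun : binCDF n (k + 1) = fun R : ℝ => binCDF n k R +
        (n.choose (k + 1) : ℝ) * R ^ (k + 1) * (1 - R) ^ (n - (k + 1)) := by
      funext R; simp [binCDF, Finset.sum_range_succ]
    rw [hfun]
    have h := (ih hkn R).add (hasDerivAt_term ((n.choose (k + 1) : ℝ)) (k + 1) (n - (k + 1)) R)
    refine h.congr_deriv (Eq.symm ?_)
    have hA := choose_A n k (by omega)
    have hB := choose_B n k hk
    have e1 : n - 1 - k = n - (k + 1) := by omega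
    have e2 : n - (k + 1) - 1 = n - 1 - (k + 1) := by omega
    have e3 : (k + 1 : ℕ) - 1 = k := by omega
    rw [e1, e2, e3] at *
    push_cast at hA hB ⊢
    linear_combination (R ^ k * (1 - R) ^ (n - (k + 1))) * hA -
      (R ^ (k + 1) * (1 - R) ^ (n - 1 - (k + 1))) * hB

lemma binCDF_nonneg (n k : ℕ) {R : ℝ} (h0 : 0 ≤ R) (h1 : R ≤ 1) : 0 ≤ binCDF n k R := by
  apply Finset.sum_nonneg
  intro j _
  exact mul_nonneg (mul_nonneg (by positivity) (pow_nonneg h0 _)) (pow_nonneg (by linarith) _)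

lemma binCDF_anti (n k : ℕ) (hk : k < n) {a b : ℝ} (h0 : 0 ≤ a) (hab : a ≤ b) (hb : b ≤ 1) :
    binCDF n k b ≤ binCDF n k a := by
  have hdiff := hasDerivAt_binCDF n k hk
  have hanti : AntitoneOn (binCDF n k) (Set.Icc (0 : ℝ) 1) := by
    apply antitoneOn_of_deriv_nonpos (convex_Icc (0 : ℝ) 1)
    · exact Continuous.continuousOn (by
        apply continuous_finset_sum
        intro j _
        continuity)
    · intro R _
      exact (hdiff R).differentiableAt.differentiableWithinAt
    · intro R hR
      rw [interior_Icc] at hR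
      rw [(hdiff R).deriv]
      have h1 : (0:ℝ) ≤ R ^ k := pow_nonneg (le_of_lt hR.1) _
      have h2 : (0:ℝ) ≤ (1 - R) ^ (n - 1 - k) := by
        apply pow_nonneg; linarith [hR.2]
      have h3 : (0:ℝ) ≤ (n : ℝ) * ((n - 1).choose k : ℝ) := by positivity
      have := mul_nonneg (mul_nonneg h3 h1) h2
      linarith
  exact hanti ⟨h0, hab.trans hb⟩ ⟨h0.trans hab, hb⟩ hab

theorem stmt_9 (n : ℕ) (hn : 0 < n) (R1 R2 : ℝ) (h0 : 0 < R1) (h12 : R1 < R2)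
    (h1 : R2 < 1) (t : ℝ) (ht : t ∈ Set.Ico (0 : ℝ) (((gam n R1 : ℝ) - 1) / n)) :
    g n R2 t ≤ g n R1 t := by
  obtain ⟨ht0, htlt⟩ := ht
  have hnR : (0:ℝ) < n := by exact_mod_cast hn
  -- facts about gam n R1
  have hne1 : {r : ℕ | (n : ℝ) * R1 ≤ r}.Nonempty :=
    ⟨n, by simp only [Set.mem_setOf_eq]; nlinarith⟩
  have hmem1 : (n : ℝ) * R1 ≤ (gam n R1 : ℝ) := Nat.sInf_mem hne1
  have hγ1pos : 0 < gam n R1 := by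
    rcases Nat.eq_zero_or_pos (gam n R1) with h | h
    · rw [h] at hmem1; simp at hmem1; nlinarith
    · exact h
  have hlt1 : ((gam n R1 : ℝ)) - 1 < (n : ℝ) * R1 := by
    have hnotmem : gam n R1 - 1 ∉ {r : ℕ | (n : ℝ) * R1 ≤ r} :=
      Nat.notMem_of_lt_sInf (show gam n R1 - 1 < gam n R1 by omega)
    simp only [Set.mem_setOf_eq, not_le] at hnotmem
    have : ((gam n R1 - 1 : ℕ) : ℝ) = (gam n R1 : ℝ) - 1 := by
      push_cast [Nat.cast_sub hγ1pos]; ring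
    linarith [this ▸ hnotmem]
  -- gam n R1 ≤ gam n R2
  have hγle : gam n R1 ≤ gam n R2 := by
    apply Nat.sInf_le
    have hmem2 : (n : ℝ) * R2 ≤ (gam n R2 : ℝ) :=
      Nat.sInf_mem (⟨n, by simp only [Set.mem_setOf_eq]; nlinarith⟩ :
        {r : ℕ | (n : ℝ) * R2 ≤ r}.Nonempty)
    simp only [Set.mem_setOf_eq]
    nlinarith
  -- ceil facts
  set k : ℤ := ⌈(n : ℝ) * t⌉ with hkdef
  have hnt : (n : ℝ) * t < (gam n R1 : ℝ) - 1 := by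
    rw [lt_div_iff₀ hnR] at htlt; linarith
  have hk0 : 0 ≤ k := Int.ceil_nonneg (mul_nonneg (le_of_lt hnR) ht0)
  have hkle : (k : ℝ) ≤ (gam n R1 : ℝ) - 1 := by
    have : k ≤ (gam n R1 : ℤ) - 1 := Int.ceil_le.mpr (by push_cast; linarith)
    exact_mod_cast by exact_mod_cast this
  have hk1 : (k : ℝ) < (n : ℝ) * R1 := lt_of_le_of_lt hkle hlt1
  have hk2 : (k : ℝ) < (n : ℝ) * R2 := by nlinarith
  have hkn : (k : ℝ) < (n : ℝ) := by nlinarith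
  -- if-conditions are false
  have hne_1 : t ≠ ((gam n R1 : ℝ) - 1) / n := ne_of_lt htlt
  have hne_2 : t ≠ ((gam n R2 : ℝ) - 1) / n := by
    apply ne_of_lt
    apply lt_of_lt_of_le htlt
    rw [div_le_div_iff₀ hnR hnR]
    have hc : (gam n R1 : ℝ) ≤ gam n R2 := by exact_mod_cast hγle
    nlinarith
  rw [g, if_neg hne_2, g, if_neg hne_1]
  -- the two factors
  have hktoNat : ((k.toNat : ℕ) : ℝ) = (k : ℝ) := by exact_mod_cast Int.toNat_of_nonneg hk0
  have hktn : k.toNat < n := by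
    have : (k : ℝ) < (n : ℝ) := hkn
    exact_mod_cast hktoNat ▸ this
  have hcdf : binCDF n k.toNat R2 ≤ binCDF n k.toNat R1 :=
    binCDF_anti n k.toNat hktn (le_of_lt h0) (le_of_lt h12) (le_of_lt h1)
  have hcdf2 : 0 ≤ binCDF n k.toNat R2 := binCDF_nonneg n k.toNat (by linarith) (le_of_lt h1)
  have hd1 : (0:ℝ) < (n : ℝ) * R1 - (k : ℝ) := by linarith
  have hd2 : (0:ℝ) < (n : ℝ) * R2 - (k : ℝ) := by linarith
  have hpre : R2 * ((n : ℝ) - (k : ℝ)) / ((n : ℝ) * R2 - (k : ℝ)) ≤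
      R1 * ((n : ℝ) - (k : ℝ)) / ((n : ℝ) * R1 - (k : ℝ)) := by
    rw [div_le_div_iff₀ hd2 hd1]
    have hk0' : (0:ℝ) ≤ (k : ℝ) := by exact_mod_cast hk0
    nlinarith [mul_nonneg hk0' (sub_nonneg.mpr (le_of_lt hkn))]
  have hpre1 : 0 ≤ R1 * ((n : ℝ) - (k : ℝ)) / ((n : ℝ) * R1 - (k : ℝ)) := by
    apply div_nonneg _ (le_of_lt hd1)
    apply mul_nonneg (le_of_lt h0); linarith
  exact mul_le_mul hpre hcdf hcdf2 hpre1
end
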